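/- Let (X; f_1, …, f_N) and (Y; g_1, …, g_N) be point-fibred iterated function systems on nonempty compact Hausdorff spaces X and Y, with the same number N of maps, coding maps π_F : I^∞ → X and π_G : I^∞ → Y, and attractors A_F = π_F(I^∞), A_G = π_G(I^∞). Let Ω_F ⊆ I^∞ be an address space for the first system with section τ_F : A_F → Ω_F. If for all σ, ω in the closure of Ω_F, π_F(σ) = π_F(ω) implies π_G(σ) = π_G(ω), then the fractal transformation T_FG = π_G ∘ τ_F : A_F → A_G is continuous. -/

import Mathlib

/-- `seqComp f σ k = f (σ 0) ∘ f (σ 1) ∘ ⋯ ∘ f (σ (k-1))`. -/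
def seqComp {X : Type*} {N : ℕ} (f : Fin N → X → X) (σ : ℕ → Fin N) : ℕ → X → X
  | 0 => id
  | k + 1 => seqComp f σ k ∘ f (σ k)

lemma seqComp_continuous {X : Type*} [TopologicalSpace X] {N : ℕ}
    (f : Fin N → X → X) (hf : ∀ i, Continuous (f i)) (σ : ℕ → Fin N) (k : ℕ) :
    Continuous (seqComp f σ k) := by
  induction k with
  | zero => exact continuous_id
  | succ k ih => exact ih.comp (hf _)

lemma seqComp_congr {X : Type*} {N : ℕ} (f : Fin N → X → X) {σ ω : ℕ → Fin N}
    {k : ℕ} (h : ∀ i < k, σ i = ω i) : seqComp f σ k = seqComp f ω k := by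
  induction k with
  | zero => rfl
  | succ k ih =>
    have h1 := ih (fun i hi => h i (Nat.lt_succ_of_lt hi))
    have h2 := h k (Nat.lt_succ_self k)
    simp [seqComp, h1, h2]

lemma coding_continuous {X : Type*} [TopologicalSpace X] [CompactSpace X]
    [T2Space X] {N : ℕ} (f : Fin N → X → X) (hf : ∀ i, Continuous (f i))
    (π : (ℕ → Fin N) → X)
    (hπ : ∀ σ : ℕ → Fin N,
      (⋂ k : ℕ, seqComp f σ k '' (Set.univ : Set X)) = {π σ}) :
    Continuous π := by
  rw [continuous_iff_continuousAt]
  intro σ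
  rw [ContinuousAt, Filter.tendsto_def]
  intro U hU
  rcases mem_nhds_iff.mp hU with ⟨U', hU'U, hU'o, hmem⟩
  set K : ℕ → Set X := fun k => seqComp f σ k '' (Set.univ : Set X) with hK
  have hcpt : ∀ k, IsCompact (K k) :=
    fun k => isCompact_univ.image (seqComp_continuous f hf σ k)
  have hanti : Antitone K := by
    apply antitone_nat_of_succ_le
    intro k x hx
    rcases hx with ⟨y, -, rfl⟩
    exact ⟨f (σ k) y, trivial, rfl⟩
  have hsub : (⋂ k, K k) ⊆ U' := by
    rw [hK]
    simp only []
    rw [hπ σ]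
    intro x hx
    rcases hx with rfl
    exact hmem
  obtain ⟨k, hk⟩ := exists_subset_nhds_of_isCompact hanti.directed_ge hcpt
    (fun x hx => hU'o.mem_nhds (hsub hx))
  -- the cylinder neighbourhood
  have hVopen : IsOpen {ω : ℕ → Fin N | ∀ i ∈ Finset.range k, ω i = σ i} := by
    have : {ω : ℕ → Fin N | ∀ i ∈ Finset.range k, ω i = σ i}
        = ⋂ i ∈ Finset.range k, (fun ω : ℕ → Fin N => ω i) ⁻¹' {σ i} := by
      ext ω; simp [Set.mem_iInter]
    rw [this]
    exact isOpen_biInter_finset fun i _ =>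
      (continuous_apply i).isOpen_preimage _ (isOpen_discrete _)
  apply Filter.mem_of_superset (hVopen.mem_nhds (by simp))
  intro ω hω
  have hωmem : π ω ∈ seqComp f ω k '' (Set.univ : Set X) := by
    have : π ω ∈ (⋂ j : ℕ, seqComp f ω j '' (Set.univ : Set X)) := by
      rw [hπ ω]; rfl
    exact Set.mem_iInter.mp this k
  have heq : seqComp f ω k = seqComp f σ k :=
    seqComp_congr f (fun i hi => hω i (Finset.mem_range.mpr hi))
  rw [heq] at hωmem
  exact hU'U (hk hωmem)

/-- Let `F` and `G` be point-fibred IFSs on nonempty compact Hausdorff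
spaces with the same code space, coding maps `π_F`, `π_G` and attractors
`A_F = π_F(I^∞)`, `A_G = π_G(I^∞)`. Let `Ω_F` be an address space for `F` with section
`τ_F`. If for all `σ, ω` in the closure of `Ω_F`, `π_F σ = π_F ω → π_G σ = π_G ω`,
then the fractal transformation `T_FG = π_G ∘ τ_F : A_F → A_G` is continuous. -/
theorem fractal_transformation_continuous
    {X : Type*} [TopologicalSpace X] [CompactSpace X] [T2Space X] [Nonempty X]
    {Y : Type*} [TopologicalSpace Y] [CompactSpace Y] [T2Space Y] [Nonempty Y]
    {N : ℕ} (hN : 0 < N)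
    (f : Fin N → X → X) (hf : ∀ i, Continuous (f i))
    (g : Fin N → Y → Y) (hg : ∀ i, Continuous (g i))
    (πF : (ℕ → Fin N) → X)
    (hπF : ∀ σ : ℕ → Fin N,
      (⋂ k : ℕ, seqComp f σ k '' (Set.univ : Set X)) = {πF σ})
    (πG : (ℕ → Fin N) → Y)
    (hπG : ∀ σ : ℕ → Fin N,
      (⋂ k : ℕ, seqComp g σ k '' (Set.univ : Set Y)) = {πG σ})
    (ΩF : Set (ℕ → Fin N)) (hΩFonto : πF '' ΩF = Set.range πF)
    (hΩFinj : Set.InjOn πF ΩF)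
    (τF : X → ℕ → Fin N)
    (hτFmem : ∀ x ∈ Set.range πF, τF x ∈ ΩF)
    (hτFsec : ∀ x ∈ Set.range πF, πF (τF x) = x)
    (hfibers : ∀ σ ∈ closure ΩF, ∀ ω ∈ closure ΩF, πF σ = πF ω → πG σ = πG ω) :
    ContinuousOn (fun x => πG (τF x)) (Set.range πF) := by
  have hπFc : Continuous πF := coding_continuous f hf πF hπF
  have hπGc : Continuous πG := coding_continuous g hg πG hπG
  set K : Set (ℕ → Fin N) := closure ΩF with hKdef
  have hKcpt : IsCompact K := isClosed_closure.isCompact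
  have hΩK : ΩF ⊆ K := subset_closure
  haveI : CompactSpace K := isCompact_iff_compactSpace.mp hKcpt
  rw [continuousOn_iff_continuous_restrict]
  set p : K → Set.range πF := fun σ => ⟨πF σ.1, Set.mem_range_self _⟩ with hp
  have hpc : Continuous p :=
    Continuous.subtype_mk (hπFc.comp continuous_subtype_val) _
  have hpsurj : Function.Surjective p := by
    rintro ⟨x, hx⟩
    exact ⟨⟨τF x, hΩK (hτFmem x hx)⟩, Subtype.ext (hτFsec x hx)⟩
  have hq : Topology.IsQuotientMap p :=
    (hpc.isClosedMap.isQuotientMap hpc hpsurj)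
  rw [hq.continuous_iff]
  have : ((Set.range πF).domRestrict fun x => πG (τF x)) ∘ p
      = fun σ : K => πG σ.1 := by
    funext σ
    have hx : πF σ.1 ∈ Set.range πF := Set.mem_range_self _
    exact hfibers (τF (πF σ.1)) (hΩK (hτFmem _ hx)) σ.1 σ.2 (hτFsec _ hx)
  rw [this]
  exact hπGc.comp continuous_subtype_val
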